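/- Let L be an R₀-algebra, k ∈ [0,1), and let F₀ ⊂ F₁ ⊂ ⋯ ⊂ F_n = L be a strictly increasing chain of fated filters of L. Then there exists an (∈,∈∨q_k)-fuzzy fated filter μ of L such that U(μ;(1−k)/2) = F₀ and the family of nonempty level sets U(μ;s) for s ∈ (0,(1−k)/2] is precisely {F₀, F₁, …, F_n}. -/

import Mathlib

open scoped Classical

/-- An R₀-algebra: a bounded distributive lattice with an order-reversing
involution `neg` and a binary operation `imp` satisfying (R1)–(R6). -/
class R0Algebra (L : Type*) extends DistribLattice L, BoundedOrder L where
  neg : L → L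
  imp : L → L → L
  neg_antitone : ∀ {x y : L}, x ≤ y → neg y ≤ neg x
  neg_neg : ∀ x : L, neg (neg x) = x
  R1 : ∀ x y : L, imp x y = imp (neg y) (neg x)
  R2 : ∀ x : L, imp ⊤ x = x
  R3 : ∀ x y z : L, (imp y z) ⊓ (imp (imp x y) (imp x z)) = imp y z
  R4 : ∀ x y z : L, imp x (imp y z) = imp y (imp x z)
  R5 : ∀ x y z : L, imp x (y ⊔ z) = (imp x y) ⊔ (imp x z)
  R6 : ∀ x y : L, (imp x y) ⊔ (imp (imp x y) ((neg x) ⊔ y)) = ⊤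

namespace R0Algebra

variable {L : Type*} [R0Algebra L]

/-- A filter of an R₀-algebra: `1 ∈ F` and `x ∈ F`, `x→y ∈ F` imply `y ∈ F`. -/
def IsFilter (F : Set L) : Prop :=
  ⊤ ∈ F ∧ ∀ x ∈ F, ∀ y : L, imp x y ∈ F → y ∈ F

/-- A fated filter of an R₀-algebra: `1 ∈ F` and for all `x,y` and `a ∈ F`,
`a→((x→y)→x) ∈ F` implies `x ∈ F`. -/
def IsFatedFilter (F : Set L) : Prop :=
  ⊤ ∈ F ∧ ∀ x y : L, ∀ a ∈ F, imp a (imp (imp x y) x) ∈ F → x ∈ F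

/-- An (∈,∈∨q_k)-fuzzy fated filter. -/
def IsFuzzyFatedFilterQk (μ : L → ℝ) (k : ℝ) : Prop :=
  (∀ (x : L) (t : ℝ), t ∈ Set.Ioc (0 : ℝ) 1 → t ≤ μ x →
      (t ≤ μ (⊤ : L) ∨ 1 < μ (⊤ : L) + t + k)) ∧
  (∀ (x a y : L) (t s : ℝ), t ∈ Set.Ioc (0 : ℝ) 1 → s ∈ Set.Ioc (0 : ℝ) 1 →
      t ≤ μ (imp a (imp (imp x y) x)) → s ≤ μ a →
      (min t s ≤ μ x ∨ 1 < μ x + min t s + k))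

/-- An (∈,∈)-fuzzy fated filter. -/
def IsFuzzyFatedFilterIn (μ : L → ℝ) : Prop :=
  (∀ (x : L) (t : ℝ), t ∈ Set.Ioc (0 : ℝ) 1 → t ≤ μ x → t ≤ μ (⊤ : L)) ∧
  (∀ (x a y : L) (t s : ℝ), t ∈ Set.Ioc (0 : ℝ) 1 → s ∈ Set.Ioc (0 : ℝ) 1 →
      t ≤ μ (imp a (imp (imp x y) x)) → s ≤ μ a → min t s ≤ μ x)

/-- A strong (∈,∈∨q_k)-fuzzy fated filter: condition (2) together with
`μ(1) ≥ μ(x)` for all `x`. -/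
def IsStrongFuzzyFatedFilterQk (μ : L → ℝ) (k : ℝ) : Prop :=
  (∀ x : L, μ x ≤ μ (⊤ : L)) ∧
  (∀ (x a y : L) (t s : ℝ), t ∈ Set.Ioc (0 : ℝ) 1 → s ∈ Set.Ioc (0 : ℝ) 1 →
      t ≤ μ (imp a (imp (imp x y) x)) → s ≤ μ a →
      (min t s ≤ μ x ∨ 1 < μ x + min t s + k))

end R0Algebra

open R0Algebra

theorem stmt_17 {L : Type*} [R0Algebra L] (k : ℝ) (hk0 : 0 ≤ k) (hk1 : k < 1)
    (n : ℕ) (F : Fin (n + 1) → Set L)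
    (hfated : ∀ i, IsFatedFilter (F i))
    (hchain : ∀ i j : Fin (n + 1), i < j → F i ⊂ F j)
    (hlast : F (Fin.last n) = Set.univ) :
    ∃ μ : L → ℝ, (∀ x, 0 ≤ μ x) ∧ (∀ x, μ x ≤ 1) ∧ IsFuzzyFatedFilterQk μ k ∧
      {x : L | (1 - k) / 2 ≤ μ x} = F 0 ∧
      {S : Set L | ∃ s ∈ Set.Ioc (0 : ℝ) ((1 - k) / 2),
          S = {x : L | s ≤ μ x} ∧ S.Nonempty} = Set.range F := by
  
  classical
  set c : ℝ := (1 - k) / 2 with hc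
  have hc0 : 0 < c := by simp only [hc]; linarith
  have hmono : ∀ i j : Fin (n + 1), i ≤ j → F i ⊆ F j := by
    intro i j hij
    rcases lt_or_eq_of_le hij with h | h
    · exact (hchain i j h).1
    · rw [h]
  have hmem : ∀ x : L, x ∈ F (Fin.last n) := fun x => by simp [hlast]
  have hSne : ∀ x : L, (Finset.univ.filter (fun i => x ∈ F i)).Nonempty :=
    fun x => ⟨Fin.last n, by simp [hmem x]⟩
  set i0 : L → Fin (n + 1) :=
    fun x => (Finset.univ.filter (fun i => x ∈ F i)).min' (hSne x) with hi0
  have hi0mem : ∀ x, x ∈ F (i0 x) := by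
    intro x
    have := Finset.min'_mem (Finset.univ.filter (fun i => x ∈ F i)) (hSne x)
    simpa using this
  have hi0le : ∀ (x : L) (i : Fin (n + 1)), x ∈ F i → i0 x ≤ i := by
    intro x i hx
    exact Finset.min'_le _ _ (by simp [hx])
  have hiff : ∀ (x : L) (i : Fin (n + 1)), x ∈ F i ↔ i0 x ≤ i := by
    intro x i
    exact ⟨hi0le x i, fun h => hmono _ _ h (hi0mem x)⟩
  set tt : Fin (n + 1) → ℝ :=
    fun i => c * ((n : ℝ) + 1 - (i : ℕ)) / ((n : ℝ) + 1) with htt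
  have hn1 : (0 : ℝ) < (n : ℝ) + 1 := by positivity
  have htstrict : ∀ i j : Fin (n + 1), i < j → tt j < tt i := by
    intro i j hij
    have : ((i : ℕ) : ℝ) < ((j : ℕ) : ℝ) := by exact_mod_cast hij
    simp only [htt]
    apply div_lt_div_of_pos_right _ hn1
    have := mul_lt_mul_of_pos_left (by linarith : (n : ℝ) + 1 - (j : ℕ) < (n : ℝ) + 1 - (i : ℕ)) hc0
    linarith
  have htanti : ∀ i j : Fin (n + 1), i ≤ j → tt j ≤ tt i := by
    intro i j hij
    rcases lt_or_eq_of_le hij with h | h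
    · exact le_of_lt (htstrict i j h)
    · rw [h]
  have htiff : ∀ i j : Fin (n + 1), tt j ≤ tt i ↔ i ≤ j := by
    intro i j
    constructor
    · intro h
      by_contra hn
      exact absurd h (not_le.mpr (htstrict j i (lt_of_not_ge hn)))
    · exact htanti i j
  have htpos : ∀ i : Fin (n + 1), 0 < tt i := by
    intro i
    have hin : ((i : ℕ) : ℝ) ≤ (n : ℝ) := by exact_mod_cast Fin.is_le i
    simp only [htt]
    apply div_pos _ hn1
    have : (0:ℝ) < (n : ℝ) + 1 - (i : ℕ) := by linarith
    positivity
  have ht0 : tt 0 = c := by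
    simp only [htt]
    have : ((0 : Fin (n+1)) : ℕ) = 0 := rfl
    rw [this]
    field_simp
    simp
  have htle : ∀ i : Fin (n + 1), tt i ≤ c := by
    intro i
    rw [← ht0]
    exact htanti 0 i (Fin.zero_le i)
  have htop : ∀ i : Fin (n + 1), (⊤ : L) ∈ F i := fun i => (hfated i).1
  have hmutop : tt (i0 (⊤ : L)) = c := by
    have : i0 (⊤ : L) ≤ 0 := hi0le _ 0 (htop 0)
    have h0 : i0 (⊤ : L) = 0 := le_antisymm this (Fin.zero_le _)
    rw [h0, ht0]
  refine ⟨fun x => tt (i0 x), fun x => le_of_lt (htpos _), fun x => le_trans (htle _) (by linarith), ⟨?_, ?_⟩, ?_, ?_⟩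
  · -- condition (1)
    intro x t ht htx
    left
    show t ≤ tt (i0 (⊤ : L))
    rw [hmutop]
    exact le_trans htx (htle _)
  · -- condition (2)
    intro x a y t s ht hs htb hsa
    left
    set b : L := imp a (imp (imp x y) x) with hb
    have hJ : x ∈ F (max (i0 b) (i0 a)) := by
      refine (hfated _).2 x y a ?_ ?_
      · exact hmono _ _ (le_max_right _ _) (hi0mem a)
      · exact hmono _ _ (le_max_left _ _) (hi0mem b)
    have h1 : i0 x ≤ max (i0 b) (i0 a) := hi0le _ _ hJ
    have h2 : tt (max (i0 b) (i0 a)) ≤ tt (i0 x) := htanti _ _ h1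
    have h3 : tt (max (i0 b) (i0 a)) = min (tt (i0 b)) (tt (i0 a)) := by
      rcases max_cases (i0 b) (i0 a) with ⟨he, hle⟩ | ⟨he, hle⟩
      · rw [he, min_eq_left (htanti _ _ hle)]
      · rw [he, min_eq_right (htanti _ _ (le_of_lt hle))]
    calc min t s ≤ min (tt (i0 b)) (tt (i0 a)) := min_le_min htb hsa
      _ ≤ tt (i0 x) := by rw [← h3]; exact h2
  · -- U(μ;c) = F 0
    ext x
    simp only [Set.mem_setOf_eq]
    rw [← ht0, htiff, ← hiff]
  · -- family of level sets = range F
    ext G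
    simp only [Set.mem_setOf_eq, Set.mem_range]
    constructor
    · rintro ⟨s, ⟨hs0, hsc⟩, rfl, -⟩
      have hTne : (Finset.univ.filter (fun i : Fin (n+1) => s ≤ tt i)).Nonempty :=
        ⟨0, by simp [ht0, hsc]⟩
      set J := (Finset.univ.filter (fun i : Fin (n+1) => s ≤ tt i)).max' hTne with hJdef
      have hJmem : s ≤ tt J := by
        have := Finset.max'_mem (Finset.univ.filter (fun i : Fin (n+1) => s ≤ tt i)) hTne
        simpa using this
      refine ⟨J, ?_⟩
      ext x
      simp only [Set.mem_setOf_eq]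
      rw [hiff x J]
      constructor
      · intro h
        exact le_trans hJmem (htanti _ _ h)
      · intro h
        exact Finset.le_max' _ _ (by simpa using h)
    · rintro ⟨j, rfl⟩
      refine ⟨tt j, ⟨htpos j, hc ▸ htle j⟩, ?_, ⟨⊤, htop j⟩⟩
      ext x
      simp only [Set.mem_setOf_eq]
      rw [htiff, ← hiff]
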